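/- Let ν be a positive finite Borel measure on the unit sphere S^{k-1} ⊆ ℝ^k with ∫_{S^{k-1}} x dν(x) = 0, and define δ(A) = ∫_{S^{k-1}} h_A(x) dν(x) for nonempty finite A ⊆ ℝ^k (δ(∅)=0), where h_A(x) = max_{a ∈ A} a·x. Then (ℝ^k, δ) is a linear semidiversity: δ is non-negative, δ(A)=0 for |A|≤1, monotone, satisfies the diversity triangle inequality with nonempty middle set, and δ(λA)=λδ(A), δ(A+B) = δ(A)+δ(B) for λ ≥ 0 and nonempty finite A, B. -/

import Mathlib

open Pointwise MeasureTheory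
open scoped Classical RealInnerProductSpace

noncomputable def sphereLinDiv {k : ℕ}
    (ν : Measure (Metric.sphere (0 : EuclideanSpace ℝ (Fin k)) 1))
    (A : Finset (EuclideanSpace ℝ (Fin k))) : ℝ :=
  if h : A.Nonempty then
    ∫ x, A.sup' h (fun a => ⟪a, (x : EuclideanSpace ℝ (Fin k))⟫) ∂ν
  else 0

section Helpers
variable {k : ℕ}

lemma norm_coe_sphere (x : Metric.sphere (0 : EuclideanSpace ℝ (Fin k)) 1) : ‖(x : EuclideanSpace ℝ (Fin k))‖ = 1 := by
  have := x.2
  rwa [mem_sphere_zero_iff_norm] at this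

variable (ν : Measure (Metric.sphere (0 : EuclideanSpace ℝ (Fin k)) 1)) [IsFiniteMeasure ν]

lemma integrable_inner' (a : EuclideanSpace ℝ (Fin k)) : Integrable (fun x : Metric.sphere (0 : EuclideanSpace ℝ (Fin k)) 1 => ⟪a, (x : EuclideanSpace ℝ (Fin k))⟫) ν := by
  refine (integrable_const ‖a‖).mono' ?_ ?_
  · exact (Continuous.inner continuous_const continuous_subtype_val).aestronglyMeasurable
  · refine Filter.Eventually.of_forall fun x => ?_
    calc ‖⟪a, (x : EuclideanSpace ℝ (Fin k))⟫‖ ≤ ‖a‖ * ‖(x : EuclideanSpace ℝ (Fin k))‖ := norm_inner_le_norm a _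
    _ = ‖a‖ := by rw [norm_coe_sphere]; ring

lemma integrable_coe' : Integrable (fun x : Metric.sphere (0 : EuclideanSpace ℝ (Fin k)) 1 => (x : EuclideanSpace ℝ (Fin k))) ν := by
  refine (integrable_const (1 : ℝ)).mono' continuous_subtype_val.aestronglyMeasurable ?_
  exact Filter.Eventually.of_forall fun x => by rw [norm_coe_sphere]

lemma integrable_sup' (A : Finset (EuclideanSpace ℝ (Fin k))) (h : A.Nonempty) :
    Integrable (fun x : Metric.sphere (0 : EuclideanSpace ℝ (Fin k)) 1 => A.sup' h (fun a => ⟪a, (x : EuclideanSpace ℝ (Fin k))⟫)) ν := by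
  induction h using Finset.Nonempty.cons_induction with
  | singleton a => exact integrable_inner' ν a
  | cons a s ha hs ih =>
      have h := (integrable_inner' ν a).sup ih
      convert h using 2 with x
      simp [Finset.sup'_cons hs, Finset.sup'_insert (H := hs), Pi.sup_apply]

lemma sphereLinDiv_eq (A : Finset (EuclideanSpace ℝ (Fin k))) (h : A.Nonempty) :
    sphereLinDiv ν A = ∫ x, A.sup' h (fun a => ⟪a, (x : EuclideanSpace ℝ (Fin k))⟫) ∂ν := dif_pos h

variable {ν}

lemma integral_inner_zero (hcent : ∫ x, (x : EuclideanSpace ℝ (Fin k)) ∂ν = 0) (a : EuclideanSpace ℝ (Fin k)) :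
    ∫ x, ⟪a, (x : EuclideanSpace ℝ (Fin k))⟫ ∂ν = 0 := by
  have : ∫ x, (innerSL ℝ a) ((x : EuclideanSpace ℝ (Fin k))) ∂ν = (innerSL ℝ a) (∫ x, (x : EuclideanSpace ℝ (Fin k)) ∂ν) :=
    ContinuousLinearMap.integral_comp_comm _ (integrable_coe' ν)
  simpa [hcent] using this

lemma sphereLinDiv_nonneg' (hcent : ∫ x, (x : EuclideanSpace ℝ (Fin k)) ∂ν = 0) (A : Finset (EuclideanSpace ℝ (Fin k))) :
    0 ≤ sphereLinDiv ν A := by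
  by_cases h : A.Nonempty
  · rw [sphereLinDiv_eq ν A h]
    obtain ⟨a, ha⟩ := h.exists_mem
    calc (0 : ℝ) = ∫ x, ⟪a, (x : EuclideanSpace ℝ (Fin k))⟫ ∂ν := (integral_inner_zero hcent a).symm
    _ ≤ _ := integral_mono (integrable_inner' ν a) (integrable_sup' ν A h)
          (fun x => Finset.le_sup' (fun a => (inner ℝ a (x : EuclideanSpace ℝ (Fin k)) : ℝ)) ha)
  · rw [sphereLinDiv, dif_neg h]

end Helpers

theorem stmt_15 {k : ℕ}
    (ν : Measure (Metric.sphere (0 : EuclideanSpace ℝ (Fin k)) 1))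
    [IsFiniteMeasure ν]
    (hcent : ∫ x, (x : EuclideanSpace ℝ (Fin k)) ∂ν = 0) :
    (∀ A, 0 ≤ sphereLinDiv ν A) ∧
    (∀ A : Finset (EuclideanSpace ℝ (Fin k)), A.card ≤ 1 → sphereLinDiv ν A = 0) ∧
    (∀ A B : Finset (EuclideanSpace ℝ (Fin k)), A ⊆ B → sphereLinDiv ν A ≤ sphereLinDiv ν B) ∧
    (∀ A B C : Finset (EuclideanSpace ℝ (Fin k)), B.Nonempty →
      sphereLinDiv ν (A ∪ C) ≤ sphereLinDiv ν (A ∪ B) + sphereLinDiv ν (B ∪ C)) ∧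
    (∀ (A : Finset (EuclideanSpace ℝ (Fin k))) (lam : ℝ), A.Nonempty → 0 ≤ lam →
      sphereLinDiv ν (lam • A) = lam * sphereLinDiv ν A) ∧
    (∀ A B : Finset (EuclideanSpace ℝ (Fin k)), A.Nonempty → B.Nonempty →
      sphereLinDiv ν (A + B) = sphereLinDiv ν A + sphereLinDiv ν B) := by
  have hnn : ∀ A, 0 ≤ sphereLinDiv ν A := sphereLinDiv_nonneg' hcent
  refine ⟨hnn, ?_, ?_, ?_, ?_, ?_⟩
  · -- card ≤ 1
    intro A hA
    interval_cases h : A.card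
    · rw [sphereLinDiv, dif_neg (by simp [Finset.not_nonempty_iff_eq_empty,
        Finset.card_eq_zero.mp h])]
    · obtain ⟨a, rfl⟩ := Finset.card_eq_one.mp h
      rw [sphereLinDiv_eq ν _ ⟨a, Finset.mem_singleton_self a⟩]
      simpa using integral_inner_zero hcent a
  · -- monotone
    intro A B hAB
    by_cases hA : A.Nonempty
    · have hB : B.Nonempty := hA.mono hAB
      rw [sphereLinDiv_eq ν A hA, sphereLinDiv_eq ν B hB]
      exact integral_mono (integrable_sup' ν A hA) (integrable_sup' ν B hB)
        (fun x => Finset.sup'_le hA _ fun a ha => Finset.le_sup' (fun a => (inner ℝ a (x : EuclideanSpace ℝ (Fin k)) : ℝ)) (hAB ha))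
    · rw [sphereLinDiv, dif_neg hA]; exact hnn B
  · -- triangle
    intro A B C hB
    have hAB : (A ∪ B).Nonempty := hB.mono Finset.subset_union_right
    have hBC : (B ∪ C).Nonempty := hB.mono Finset.subset_union_left
    by_cases hAC : (A ∪ C).Nonempty
    · have key : sphereLinDiv ν (A ∪ C) + sphereLinDiv ν B ≤
          sphereLinDiv ν (A ∪ B) + sphereLinDiv ν (B ∪ C) := by
        rw [sphereLinDiv_eq ν _ hAC, sphereLinDiv_eq ν B hB,
          sphereLinDiv_eq ν _ hAB, sphereLinDiv_eq ν _ hBC,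
          ← integral_add (integrable_sup' ν _ hAC) (integrable_sup' ν B hB),
          ← integral_add (integrable_sup' ν _ hAB) (integrable_sup' ν _ hBC)]
        refine integral_mono ((integrable_sup' ν _ hAC).add (integrable_sup' ν B hB))
          ((integrable_sup' ν _ hAB).add (integrable_sup' ν _ hBC)) (fun x => ?_)
        simp only
        have hsub : (A ∪ C).sup' hAC (fun a => ⟪a, (x : EuclideanSpace ℝ (Fin k))⟫) ≤
            (A ∪ B).sup' hAB (fun a => ⟪a, (x : EuclideanSpace ℝ (Fin k))⟫) +
            (B ∪ C).sup' hBC (fun a => ⟪a, (x : EuclideanSpace ℝ (Fin k))⟫) -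
            B.sup' hB (fun a => ⟪a, (x : EuclideanSpace ℝ (Fin k))⟫) := by
          refine Finset.sup'_le hAC _ fun c hc => ?_
          rcases Finset.mem_union.mp hc with hcA | hcC
          · have h1 : ⟪c, (x : EuclideanSpace ℝ (Fin k))⟫ ≤ (A ∪ B).sup' hAB (fun a => ⟪a, (x : EuclideanSpace ℝ (Fin k))⟫) :=
              Finset.le_sup' (fun a => (inner ℝ a (x : EuclideanSpace ℝ (Fin k)) : ℝ)) (Finset.mem_union_left _ hcA)
            have h2 : B.sup' hB (fun a => ⟪a, (x : EuclideanSpace ℝ (Fin k))⟫) ≤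
                (B ∪ C).sup' hBC (fun a => ⟪a, (x : EuclideanSpace ℝ (Fin k))⟫) :=
              Finset.sup'_le hB _ fun b hb => Finset.le_sup' (fun a => (inner ℝ a (x : EuclideanSpace ℝ (Fin k)) : ℝ)) (Finset.mem_union_left _ hb)
            linarith
          · have h1 : ⟪c, (x : EuclideanSpace ℝ (Fin k))⟫ ≤ (B ∪ C).sup' hBC (fun a => ⟪a, (x : EuclideanSpace ℝ (Fin k))⟫) :=
              Finset.le_sup' (fun a => (inner ℝ a (x : EuclideanSpace ℝ (Fin k)) : ℝ)) (Finset.mem_union_right _ hcC)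
            have h2 : B.sup' hB (fun a => ⟪a, (x : EuclideanSpace ℝ (Fin k))⟫) ≤
                (A ∪ B).sup' hAB (fun a => ⟪a, (x : EuclideanSpace ℝ (Fin k))⟫) :=
              Finset.sup'_le hB _ fun b hb => Finset.le_sup' (fun a => (inner ℝ a (x : EuclideanSpace ℝ (Fin k)) : ℝ)) (Finset.mem_union_right _ hb)
            linarith
        linarith
      have := hnn B
      linarith
    · rw [sphereLinDiv, dif_neg hAC]
      have := hnn (A ∪ B); have := hnn (B ∪ C); linarith
  · -- homogeneity
    intro A lam hA hlam
    have hlA : (lam • A).Nonempty := hA.smul_finset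
    rw [sphereLinDiv_eq ν _ hlA, sphereLinDiv_eq ν A hA, ← integral_const_mul]
    refine integral_congr_ae (Filter.Eventually.of_forall fun x => ?_)
    show (lam • A).sup' hlA (fun a => (inner ℝ a (x : EuclideanSpace ℝ (Fin k)) : ℝ)) =
      lam * A.sup' hA (fun a => (inner ℝ a (x : EuclideanSpace ℝ (Fin k)) : ℝ))
    have h1 : (lam • A).sup' hlA (fun a => (inner ℝ a (x : EuclideanSpace ℝ (Fin k)) : ℝ)) =
        A.sup' hA (fun a => (inner ℝ (lam • a) (x : EuclideanSpace ℝ (Fin k)) : ℝ)) :=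
      Finset.sup'_image hlA _
    rw [h1]
    simp only [real_inner_smul_left]
    have h2 := Finset.comp_sup'_eq_sup'_comp
      (f := fun a => (inner ℝ a (x : EuclideanSpace ℝ (Fin k)) : ℝ)) hA (fun r => lam * r)
      (fun r s => by
        exact mul_max_of_nonneg r s hlam)
    simpa only [Function.comp] using h2.symm
  · -- additivity
    intro A B hA hB
    have hAB : (A + B).Nonempty := hA.add hB
    rw [sphereLinDiv_eq ν _ hAB, sphereLinDiv_eq ν A hA, sphereLinDiv_eq ν B hB,
      ← integral_add (integrable_sup' ν A hA) (integrable_sup' ν B hB)]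
    refine integral_congr_ae (Filter.Eventually.of_forall fun x => ?_)
    simp only
    refine le_antisymm (Finset.sup'_le hAB _ fun c hc => ?_) ?_
    · obtain ⟨a, ha, b, hb, rfl⟩ := Finset.mem_add.mp hc
      rw [inner_add_left]
      exact add_le_add (Finset.le_sup' (fun a => (inner ℝ a (x : EuclideanSpace ℝ (Fin k)) : ℝ)) ha) (Finset.le_sup' (fun a => (inner ℝ a (x : EuclideanSpace ℝ (Fin k)) : ℝ)) hb)
    · obtain ⟨a, ha, hea⟩ := Finset.exists_mem_eq_sup' hA (fun a => ⟪a, (x : EuclideanSpace ℝ (Fin k))⟫)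
      obtain ⟨b, hb, heb⟩ := Finset.exists_mem_eq_sup' hB (fun a => ⟪a, (x : EuclideanSpace ℝ (Fin k))⟫)
      rw [hea, heb, ← inner_add_left]
      exact Finset.le_sup' (fun a => (inner ℝ a (x : EuclideanSpace ℝ (Fin k)) : ℝ)) (Finset.add_mem_add ha hb)
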